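/- Let a > 0, b = 2, S > 0, and set m_n := S·n³ for n ∈ ℕ, with v(r) = exp(-a/(1-r)²). Then there exist C > 0 and N ∈ ℕ such that for all n ≥ N: | m_{n+1}·log( r_{m_{n+1}} / r_{m_n} ) - G·S^{2/3}·n - 2G·S^{2/3} - (1/3)·G²·S^{1/3} | ≤ C·n^{-1}. -/

import Mathlib

open Real

set_option maxHeartbeats 2000000



lemma aux_log (t : ℝ) (ht : 0 < t) (ht2 : t ≤ 1/2) :
    |3 * Real.log (1 - t) + ((1-(1-t)^3)/(1-t) + (1-(1-t)^3)^2/(6*(1-t)^2))| ≤ 14 * t^4 := by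
  have h1 : |t| < 1 := by rw [abs_of_pos ht]; linarith
  have h2 := Real.abs_log_sub_add_sum_range_le h1 3
  rw [abs_of_pos ht] at h2
  have hsum : (∑ i ∈ Finset.range 3, t ^ (i + 1) / (i + 1)) = t + t^2/2 + t^3/3 := by
    simp [Finset.sum_range_succ]; ring
  rw [hsum] at h2
  have hw : (0:ℝ) < 1 - t := by linarith
  have hw2 : (1:ℝ)/2 ≤ 1 - t := by linarith
  -- rational identity
  have hid : (1-(1-t)^3)/(1-t) + (1-(1-t)^3)^2/(6*(1-t)^2)
      = 3*t + (3/2)*t^2 + t^3 + t^4*(12-12*t+t^2)/(6*(1-t)^2) := by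
    field_simp
    ring
  rw [hid]
  have key : 3 * Real.log (1 - t) + (3*t + (3/2)*t^2 + t^3 + t^4*(12-12*t+t^2)/(6*(1-t)^2))
      = 3 * ((t + t^2/2 + t^3/3) + Real.log (1-t)) + t^4*(12-12*t+t^2)/(6*(1-t)^2) := by ring
  rw [key]
  have b1 : |3 * ((t + t^2/2 + t^3/3) + Real.log (1-t))| ≤ 6 * t^4 := by
    rw [abs_mul, abs_of_pos (by norm_num : (0:ℝ) < 3)]
    have : t^4 / (1-t) ≤ 2 * t^4 := by
      rw [div_le_iff₀ hw]; nlinarith [pow_pos ht 4]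
    linarith
  have b2 : |t^4*(12-12*t+t^2)/(6*(1-t)^2)| ≤ 8 * t^4 := by
    rw [abs_div, abs_mul]
    have hnum : |(12-12*t+t^2 : ℝ)| ≤ 12 := by
      rw [abs_le]; constructor <;> nlinarith
    have hden : |6*(1-t)^2| ≥ 3/2 := by
      rw [abs_of_pos (by positivity)]; nlinarith
    have ht4 : |t^4| = t^4 := abs_of_pos (by positivity)
    rw [ht4]
    calc t^4 * |(12-12*t+t^2: ℝ)| / |6*(1-t)^2| ≤ t^4 * 12 / (3/2) := by
          apply div_le_div₀ (by positivity) (by nlinarith [pow_pos ht 4]) (by norm_num) hden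
      _ = 8 * t^4 := by ring
  calc |3 * ((t + t^2/2 + t^3/3) + Real.log (1-t)) + t^4*(12-12*t+t^2)/(6*(1-t)^2)|
      ≤ |3 * ((t + t^2/2 + t^3/3) + Real.log (1-t))| + |t^4*(12-12*t+t^2)/(6*(1-t)^2)| := abs_add_le _ _
    _ ≤ 6 * t^4 + 8 * t^4 := add_le_add b1 b2
    _ = 14 * t^4 := by ring

lemma aux_eps (ε d : ℝ) (hε : 0 < ε) (hε2 : ε ≤ 1/2)
    (hd : d = ε / (1-ε) ^ ((1:ℝ)/3)) :
    |Real.log (1-ε) + (d + d^2/6)| ≤ 14 * ε^4 := by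
  set y := (1-ε) ^ ((1:ℝ)/3) with hy
  have h1ε : (0:ℝ) < 1 - ε := by linarith
  have hy0 : 0 < y := Real.rpow_pos_of_pos h1ε _
  have hy3 : y ^ 3 = 1 - ε := by
    rw [hy, ← Real.rpow_natCast ((1-ε) ^ ((1:ℝ)/3)) 3, ← Real.rpow_mul h1ε.le]
    norm_num
  have hy1 : y < 1 := by
    apply Real.rpow_lt_one h1ε.le (by linarith) (by norm_num)
  have hyge : 1 - ε ≤ y := by
    have := Real.rpow_le_rpow_of_exponent_ge h1ε (by linarith : 1 - ε ≤ 1)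
      (by norm_num : (1:ℝ)/3 ≤ 1)
    rwa [Real.rpow_one] at this
  set t := 1 - y with hty
  have ht : 0 < t := by simp [hty]; linarith
  have htε : t ≤ ε := by simp [hty]; linarith
  have ht2 : t ≤ 1/2 := le_trans htε hε2
  have hyt : 1 - t = y := by ring
  have hεt : ε = 1 - (1-t)^3 := by rw [hyt, hy3]; ring
  have hlog : Real.log (1-ε) = 3 * Real.log (1-t) := by
    rw [hyt, ← hy3, Real.log_pow]; push_cast; ring
  have hdt : d = (1-(1-t)^3)/(1-t) := by rw [hyt, hy3, hd]; ring
  have := aux_log t ht ht2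
  rw [hlog, hdt]
  have e2 : ((1-(1-t)^3)/(1-t))^2/6 = (1-(1-t)^3)^2/(6*(1-t)^2) := by rw [div_pow]; ring
  rw [e2]
  calc |3 * Real.log (1-t) + ((1-(1-t)^3)/(1-t) + (1-(1-t)^3)^2/(6*(1-t)^2))| ≤ 14 * t^4 := this
    _ ≤ 14 * ε^4 := by nlinarith [pow_le_pow_left₀ ht.le htε 4]

lemma cube_eq {x y : ℝ} (hx : 0 < x) (hy : 0 < y) (h : x^3 = y^3) : x = y := by
  nlinarith [sq_nonneg (x - y), sq_nonneg (x + y), mul_pos hx hy]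

lemma aux_index (a S : ℝ) (ha : 0 < a) (hS : 0 < S) (c : ℝ) (hc : 0 < c)
    (hc3 : c^3 = 2*a/S) (x : ℝ) (hx : 1 ≤ x) (r : ℝ) (hr0 : 0 < r) (hr1 : r < 1)
    (heq : S * x^3 * (1-r)^3 = 2*a*r) (hsmall : c / x ≤ 1/2) :
    |Real.log r + (c/x + (c/x)^2/6)| ≤ 14 * (c/x)^4 := by
  have hx0 : (0:ℝ) < x := by linarith
  have hε : 0 < 1 - r := by linarith
  have hr3 : (r ^ ((1:ℝ)/3))^3 = r := by
    rw [← Real.rpow_natCast (r ^ ((1:ℝ)/3)) 3, ← Real.rpow_mul hr0.le]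
    norm_num
  have hrp : 0 < r ^ ((1:ℝ)/3) := Real.rpow_pos_of_pos hr0 _
  have hcube : ((1-r)/r^((1:ℝ)/3))^3 = (c/x)^3 := by
    rw [div_pow, div_pow, hr3, hc3, div_div, div_eq_div_iff hr0.ne' (by positivity)]
    linear_combination heq
  have hd : c/x = (1-r)/r^((1:ℝ)/3) := (cube_eq (by positivity) (by positivity) hcube).symm
  have h3 : (1-r)^3 ≤ (c/x)^3 := by
    rw [div_pow, hc3, div_div, le_div_iff₀ (by positivity)]
    nlinarith
  have hεle : 1 - r ≤ c/x := by
    by_contra hcon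
    push_neg at hcon
    have : (c/x)^3 < (1-r)^3 := pow_lt_pow_left₀ hcon (by positivity) (by norm_num)
    linarith
  have hε2 : 1 - r ≤ 1/2 := le_trans hεle hsmall
  have hd' : c/x = (1-r)/(1-(1-r)) ^ ((1:ℝ)/3) := by
    rw [hd]; norm_num
  have H := aux_eps (1-r) (c/x) hε hε2 hd'
  have hsimp : (1:ℝ) - (1-r) = r := by ring
  rw [hsimp] at H
  calc |Real.log r + (c/x + (c/x)^2/6)| ≤ 14 * (1-r)^4 := H
    _ ≤ 14 * (c/x)^4 := by nlinarith [pow_le_pow_left₀ hε.le hεle 4]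

/-- Lemma 4.4 for `b = 2`. With `m_n = S n³`, `G = (2a)^{1/3}` and
`r_m` the unique solution in `(0,1)` of `m(1-r)³ = 2a r`, one has for all large `n`:
`|m_{n+1} log(r_{m_{n+1}}/r_{m_n}) - G S^{2/3} n - 2G S^{2/3} - (1/3) G² S^{1/3}| ≤ C n^{-1}`. -/
theorem stmt_15
    (a : ℝ) (ha : 0 < a)
    (S : ℝ) (hS : 0 < S)
    (G : ℝ) (hG : G = (2 * a) ^ ((1:ℝ) / 3))
    (rr : ℝ → ℝ)
    (hrr : ∀ m : ℝ, 0 < m → rr m ∈ Set.Ioo (0:ℝ) 1 ∧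
      m * (1 - rr m) ^ 3 = 2 * a * rr m)
    (mm : ℕ → ℝ) (hmm : ∀ n : ℕ, mm n = S * (n : ℝ) ^ 3) :
    ∃ C : ℝ, 0 < C ∧ ∃ N : ℕ, ∀ n : ℕ, N ≤ n →
      |mm (n+1) * Real.log (rr (mm (n+1)) / rr (mm n)) -
        G * S ^ ((2:ℝ) / 3) * (n : ℝ) - 2 * G * S ^ ((2:ℝ) / 3) -
        (1 / 3) * G ^ 2 * S ^ ((1:ℝ) / 3)| ≤ C * (n : ℝ)⁻¹ := by
  have h2a : (0:ℝ) < 2 * a := by linarith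
  have h2aS : (0:ℝ) < 2 * a / S := by positivity
  obtain ⟨c, hc, hc3, hGS2, hGS1⟩ : ∃ c : ℝ, 0 < c ∧ c ^ 3 = 2*a/S ∧
      G * S ^ ((2:ℝ)/3) = S * c ∧ G ^ 2 * S ^ ((1:ℝ)/3) = S * c ^ 2 := by
    refine ⟨(2*a/S) ^ ((1:ℝ)/3), Real.rpow_pos_of_pos h2aS _, ?_, ?_, ?_⟩
    · rw [← Real.rpow_natCast ((2*a/S) ^ ((1:ℝ)/3)) 3, ← Real.rpow_mul h2aS.le]
      norm_num
    · have hS13 : (0:ℝ) < S ^ ((1:ℝ)/3) := Real.rpow_pos_of_pos hS _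
      have h23 : S ^ ((2:ℝ)/3) * S ^ ((1:ℝ)/3) = S := by
        rw [← Real.rpow_add hS]; norm_num
      rw [hG, Real.div_rpow h2a.le hS.le]
      field_simp
      linear_combination h23
    · have hS13 : (0:ℝ) < S ^ ((1:ℝ)/3) := Real.rpow_pos_of_pos hS _
      have hS23 : (0:ℝ) < S ^ ((2:ℝ)/3) := Real.rpow_pos_of_pos hS _
      have h23 : S ^ ((2:ℝ)/3) * S ^ ((1:ℝ)/3) = S := by
        rw [← Real.rpow_add hS]; norm_num
      have hc2 : ((2*a/S) ^ ((1:ℝ)/3)) ^ 2 = (2*a) ^ ((2:ℝ)/3) / S ^ ((2:ℝ)/3) := by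
        rw [Real.div_rpow h2a.le hS.le, div_pow,
          ← Real.rpow_natCast ((2*a) ^ ((1:ℝ)/3)) 2, ← Real.rpow_natCast (S ^ ((1:ℝ)/3)) 2,
          ← Real.rpow_mul h2a.le, ← Real.rpow_mul hS.le]
        norm_num
      rw [hG, hc2, ← Real.rpow_natCast ((2*a) ^ ((1:ℝ)/3)) 2, ← Real.rpow_mul h2a.le]
      norm_num
      field_simp
      linear_combination h23
  refine ⟨S*c + S*c^2 + 224*S*c^4, by positivity, max 1 (⌈2*c⌉₊ + 1), ?_⟩
  intro n hn
  have hn1 : 1 ≤ n := le_trans (le_max_left _ _) hn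
  have hnc : ⌈2*c⌉₊ + 1 ≤ n := le_trans (le_max_right _ _) hn
  have hx1 : (1:ℝ) ≤ (n:ℝ) := by exact_mod_cast hn1
  have hx0 : (0:ℝ) < (n:ℝ) := by linarith
  set x : ℝ := (n:ℝ) with hxdef
  have h2cx : 2*c ≤ x := by
    calc 2*c ≤ (⌈2*c⌉₊ : ℝ) := Nat.le_ceil _
      _ ≤ x := by rw [hxdef]; exact_mod_cast Nat.le_of_succ_le hnc
  have hsmall : c / x ≤ 1/2 := by
    rw [div_le_iff₀ hx0]; linarith
  have hsmall' : c / (x+1) ≤ 1/2 := by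
    rw [div_le_iff₀ (by linarith)]; linarith
  -- facts about r at index n and n+1
  have hm0 : 0 < mm n := by rw [hmm]; positivity
  have hm1 : 0 < mm (n+1) := by
    rw [hmm]; push_cast; positivity
  obtain ⟨hmem0, heq0⟩ := hrr (mm n) hm0
  obtain ⟨hmem1, heq1⟩ := hrr (mm (n+1)) hm1
  obtain ⟨hr00, hr01⟩ := hmem0
  obtain ⟨hr10, hr11⟩ := hmem1
  have heq0' : S * x^3 * (1 - rr (mm n))^3 = 2*a*(rr (mm n)) := by
    rw [← hmm]; exact heq0
  have heq1' : S * (x+1)^3 * (1 - rr (mm (n+1)))^3 = 2*a*(rr (mm (n+1))) := by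
    have : mm (n+1) = S * (x+1)^3 := by rw [hmm]; push_cast; ring
    rw [← this]; exact heq1
  have H0 := aux_index a S ha hS c hc hc3 x hx1 _ hr00 hr01 heq0' hsmall
  have H1 := aux_index a S ha hS c hc hc3 (x+1) (by linarith) _ hr10 hr11 heq1' hsmall'
  -- expand the target
  have hlogdiv : Real.log (rr (mm (n+1)) / rr (mm n))
      = Real.log (rr (mm (n+1))) - Real.log (rr (mm n)) :=
    Real.log_div hr10.ne' hr00.ne'
  set E1 : ℝ := Real.log (rr (mm (n+1))) + (c/(x+1) + (c/(x+1))^2/6) with hE1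
  set E2 : ℝ := Real.log (rr (mm n)) + (c/x + (c/x)^2/6) with hE2
  have hΔ : S*(x+1)^3 * ((c/x + (c/x)^2/6) - (c/(x+1) + (c/(x+1))^2/6))
      - S*c*x - 2*(S*c) - (1/3)*(S*c^2) = S*c/x + S*c^2*(3*x+1)/(6*x^2) := by
    have hx0' : x ≠ 0 := hx0.ne'
    have hx1' : x + 1 ≠ 0 := by positivity
    field_simp
    ring
  have hexpand : mm (n+1) * Real.log (rr (mm (n+1)) / rr (mm n)) -
        G * S ^ ((2:ℝ) / 3) * (n : ℝ) - 2 * (G * S ^ ((2:ℝ) / 3)) -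
        (1 / 3) * (G ^ 2 * S ^ ((1:ℝ) / 3))
      = S*(x+1)^3*(E1 - E2) + (S*c/x + S*c^2*(3*x+1)/(6*x^2)) := by
    rw [hlogdiv, hGS2, hGS1, hE1, hE2, hmm]
    push_cast
    linear_combination hΔ
  -- bounds
  have hcx4 : c/(x+1) ≤ c/x := by
    apply div_le_div_of_nonneg_left hc.le hx0
    linarith
  have hb1 : |E1| ≤ 14 * (c/x)^4 := by
    refine le_trans H1 ?_
    have := pow_le_pow_left₀ (by positivity : (0:ℝ) ≤ c/(x+1)) hcx4 4
    linarith
  have hb2 : |E2| ≤ 14 * (c/x)^4 := H0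
  have hcube8 : (x+1)^3 ≤ 8*x^3 := by nlinarith
  have hA : |S*(x+1)^3*(E1 - E2)| ≤ 224*S*c^4/x := by
    rw [abs_mul, abs_of_pos (by positivity : (0:ℝ) < S*(x+1)^3)]
    have h12 : |E1 - E2| ≤ 28 * (c/x)^4 := by
      calc |E1 - E2| ≤ |E1| + |E2| := abs_sub _ _
        _ ≤ 28 * (c/x)^4 := by linarith
    calc S*(x+1)^3 * |E1 - E2| ≤ S*(8*x^3) * (28 * (c/x)^4) := by
          apply mul_le_mul (by nlinarith) h12 (abs_nonneg _) (by positivity)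
      _ = 224*S*c^4/x * (x^4/x^4) := by field_simp; ring
      _ = 224*S*c^4/x := by rw [div_self (by positivity : x^4 ≠ 0), mul_one]
  have hB : S*c/x + S*c^2*(3*x+1)/(6*x^2) ≤ (S*c + S*c^2)/x := by
    have h1 : S*c^2*(3*x+1)/(6*x^2) ≤ S*c^2/x := by
      rw [div_le_div_iff₀ (by positivity) hx0]
      nlinarith [mul_nonneg (mul_nonneg (mul_pos hS (pow_pos hc 2)).le hx0.le)
        (by linarith : (0:ℝ) ≤ 3*x - 1)]
    have h2 : (S*c + S*c^2)/x = S*c/x + S*c^2/x := by ring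
    linarith
  have hBpos : 0 ≤ S*c/x + S*c^2*(3*x+1)/(6*x^2) := by positivity
  have final : |S*(x+1)^3*(E1 - E2) + (S*c/x + S*c^2*(3*x+1)/(6*x^2))|
      ≤ (S*c + S*c^2 + 224*S*c^4) * x⁻¹ := by
    calc |S*(x+1)^3*(E1 - E2) + (S*c/x + S*c^2*(3*x+1)/(6*x^2))|
        ≤ |S*(x+1)^3*(E1 - E2)| + |S*c/x + S*c^2*(3*x+1)/(6*x^2)| := abs_add_le _ _
      _ ≤ 224*S*c^4/x + (S*c + S*c^2)/x := by
          rw [abs_of_nonneg hBpos]; linarith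
      _ = (S*c + S*c^2 + 224*S*c^4) * x⁻¹ := by field_simp; ring
  calc |mm (n+1) * Real.log (rr (mm (n+1)) / rr (mm n)) -
        G * S ^ ((2:ℝ) / 3) * (n : ℝ) - 2 * G * S ^ ((2:ℝ) / 3) -
        (1 / 3) * G ^ 2 * S ^ ((1:ℝ) / 3)|
      = |S*(x+1)^3*(E1 - E2) + (S*c/x + S*c^2*(3*x+1)/(6*x^2))| := by
        rw [← hexpand]; ring_nf
    _ ≤ (S*c + S*c^2 + 224*S*c^4) * x⁻¹ := final
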